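/- Let f : ℝ → ℝ be a convex function with f(0) ≤ 0, let A be an n×n Hermitian complex matrix, and let Z be an n×n complex matrix which is a contraction (operator norm at most 1). Then for every j ≥ 1 with 2j−1 ≤ n, λ_{2j-1}(f(Zᴴ A Z)) ≤ λ_j(Zᴴ f(A) Z), where λ_j(·) denotes the j-th largest eigenvalue counted with multiplicity. -/

import Mathlib

open Matrix
open scoped ComplexOrder

/-- The `j`-th largest eigenvalue of a Hermitian matrix (`0`-indexed, so `eigDesc hA ⟨0, _⟩`
is the largest), counted with multiplicity. -/
noncomputable def eigDesc {n : ℕ} {A : Matrix (Fin n) (Fin n) ℂ} (hA : A.IsHermitian)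
    (j : Fin n) : ℝ :=
  hA.eigenvalues (Tuple.sort hA.eigenvalues j.rev)

/-- Applying a real function to a Hermitian matrix via the functional calculus yields a
Hermitian matrix. -/
lemma isHermitian_cfc {n : ℕ} {A : Matrix (Fin n) (Fin n) ℂ} (hA : A.IsHermitian)
    (f : ℝ → ℝ) : (hA.cfc f).IsHermitian := by
  rw [← hA.cfc_eq]
  exact cfc_predicate f A

lemma isHermitian_half_smul {n : ℕ} {X : Matrix (Fin n) (Fin n) ℂ} (hX : X.IsHermitian) :
    ((2 : ℝ)⁻¹ • X).IsHermitian := by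
  show _ = _
  rw [Matrix.conjTranspose_smul, star_trivial, hX.eq]

lemma isHermitian_sum_conj {m n : ℕ} {A : Fin m → Matrix (Fin n) (Fin n) ℂ}
    (Z : Fin m → Matrix (Fin n) (Fin n) ℂ) (hA : ∀ i, (A i).IsHermitian) :
    (∑ i, (Z i)ᴴ * A i * Z i).IsHermitian := by
  show _ = _
  rw [Matrix.conjTranspose_sum]
  exact Finset.sum_congr rfl fun i _ => (isHermitian_conjTranspose_mul_mul (Z i) (hA i)).eq


section EigProofHelpers

variable {n : ℕ}

section helpers

lemma sum_dotProduct' {ι : Type*} [Fintype ι] (u : ι → (Fin n → ℂ)) (w : Fin n → ℂ) :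
    (∑ i, u i) ⬝ᵥ w = ∑ i, u i ⬝ᵥ w := by
  simp only [dotProduct, Finset.sum_apply, Finset.sum_mul]
  rw [Finset.sum_comm]

lemma dotProduct_sum' {ι : Type*} [Fintype ι] (w : Fin n → ℂ) (u : ι → (Fin n → ℂ)) :
    w ⬝ᵥ (∑ i, u i) = ∑ i, w ⬝ᵥ u i := by
  simp only [dotProduct, Finset.sum_apply, Finset.mul_sum]
  rw [Finset.sum_comm]

lemma dot_expand {ι : Type*} [Fintype ι] [DecidableEq ι] (v : ι → (Fin n → ℂ))
    (hv : ∀ i j, star (v i) ⬝ᵥ v j = if i = j then 1 else 0) (a b : ι → ℂ) :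
    star (∑ i, a i • v i) ⬝ᵥ (∑ j, b j • v j) = ∑ i, (starRingEnd ℂ) (a i) * b i := by
  have e1 : star (∑ i, a i • v i) = ∑ i, (starRingEnd ℂ) (a i) • star (v i) := by
    rw [star_sum]
    refine Finset.sum_congr rfl fun i _ => ?_
    rw [star_smul]; rfl
  rw [e1, sum_dotProduct']
  refine Finset.sum_congr rfl fun i _ => ?_
  rw [dotProduct_sum']
  have : ∀ j, ((starRingEnd ℂ) (a i) • star (v i)) ⬝ᵥ (b j • v j)
      = (starRingEnd ℂ) (a i) * b j * (star (v i) ⬝ᵥ v j) := by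
    intro j
    rw [smul_dotProduct, dotProduct_smul, smul_eq_mul, smul_eq_mul]
    ring
  simp only [this, hv, mul_ite, mul_one, mul_zero]
  simp

lemma exists_weights {ι : Type*} [Fintype ι] [DecidableEq ι]
    (v : ι → (Fin n → ℂ))
    (hv : ∀ i j, star (v i) ⬝ᵥ v j = if i = j then 1 else 0) (c : ι → ℂ) :
    ∃ w : ι → ℝ, (∀ i, 0 ≤ w i) ∧ ((star (∑ i, c i • v i) ⬝ᵥ (∑ i, c i • v i)).re = ∑ i, w i) ∧
      ∀ (X : Matrix (Fin n) (Fin n) ℂ) (μ : ι → ℝ), (∀ i, X *ᵥ v i = (μ i : ℂ) • v i) →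
        (star (∑ i, c i • v i) ⬝ᵥ (X *ᵥ (∑ i, c i • v i))).re = ∑ i, w i * μ i := by
  refine ⟨fun i => Complex.normSq (c i), fun i => Complex.normSq_nonneg _, ?_, ?_⟩
  · rw [dot_expand v hv c c, Complex.re_sum]
    refine Finset.sum_congr rfl fun i _ => ?_
    rw [← Complex.normSq_eq_conj_mul_self, Complex.ofReal_re]
  · intro X μ hXv
    have e2 : X *ᵥ (∑ i, c i • v i) = ∑ i, (c i * (μ i : ℂ)) • v i := by
      have : X *ᵥ (∑ i, c i • v i) = ∑ i, c i • (X *ᵥ v i) := by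
        rw [← Matrix.mulVecLin_apply, map_sum]
        refine Finset.sum_congr rfl fun i _ => ?_
        rw [LinearMap.map_smul, Matrix.mulVecLin_apply]
      rw [this]
      refine Finset.sum_congr rfl fun i _ => ?_
      rw [hXv i, smul_smul]
    rw [e2, dot_expand v hv c _, Complex.re_sum]
    refine Finset.sum_congr rfl fun i _ => ?_
    have : (starRingEnd ℂ) (c i) * (c i * (μ i : ℂ)) = ((Complex.normSq (c i) * μ i : ℝ) : ℂ) := by
      rw [Complex.ofReal_mul, Complex.normSq_eq_conj_mul_self]
      ring
    rw [this, Complex.ofReal_re]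

lemma bdot {X : Matrix (Fin n) (Fin n) ℂ} (hX : X.IsHermitian) (i j : Fin n) :
    star (hX.eigenvectorBasis i : Fin n → ℂ) ⬝ᵥ (hX.eigenvectorBasis j : Fin n → ℂ)
      = if i = j then 1 else 0 := by
  have := orthonormal_iff_ite.mp hX.eigenvectorBasis.orthonormal i j
  rw [EuclideanSpace.inner_eq_star_dotProduct, dotProduct_comm] at this
  exact this

lemma lin_indep_of_dot {ι : Type*} [Fintype ι] [DecidableEq ι] (v : ι → Fin n → ℂ)
    (hv : ∀ i j, star (v i) ⬝ᵥ v j = if i = j then 1 else 0) :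
    LinearIndependent ℂ v := by
  rw [Fintype.linearIndependent_iff]
  intro c hc j
  have h1 : star (v j) ⬝ᵥ (∑ i, c i • v i) = c j := by
    rw [dotProduct_sum']
    have e : ∀ i, star (v j) ⬝ᵥ (c i • v i) = c i * (star (v j) ⬝ᵥ v i) := fun i => by
      rw [dotProduct_smul, smul_eq_mul]
    simp only [e, hv, mul_ite, mul_one, mul_zero]
    simp
  rw [hc] at h1
  simpa using h1.symm

lemma nsq_pos {x : Fin n → ℂ} (hx : x ≠ 0) : 0 < (star x ⬝ᵥ x).re := by
  have h1 : (star x ⬝ᵥ x).re = ∑ i, Complex.normSq (x i) := by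
    rw [dotProduct, Complex.re_sum]
    refine Finset.sum_congr rfl fun i _ => ?_
    rw [Pi.star_apply]
    rw [show star (x i) = (starRingEnd ℂ) (x i) from rfl]
    rw [← Complex.normSq_eq_conj_mul_self, Complex.ofReal_re]
  rw [h1]
  obtain ⟨i, hi⟩ := Function.ne_iff.mp hx
  exact Finset.sum_pos' (fun i _ => Complex.normSq_nonneg _)
    ⟨i, Finset.mem_univ i, by simpa using Complex.normSq_pos.mpr hi⟩

lemma exists_ne_zero_mem_inf (M N : Submodule ℂ (Fin n → ℂ))
    (h : n < Module.finrank ℂ M + Module.finrank ℂ N) :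
    ∃ x : Fin n → ℂ, x ≠ 0 ∧ x ∈ M ∧ x ∈ N := by
  have h1 := Submodule.finrank_sup_add_finrank_inf_eq M N
  have h2 : Module.finrank ℂ ↥(M ⊔ N) ≤ n := by
    have := Submodule.finrank_le (M ⊔ N)
    simpa [Module.finrank_pi] using this
  have h3 : 0 < Module.finrank ℂ ↥(M ⊓ N) := by omega
  obtain ⟨x, hx⟩ := Module.finrank_pos_iff_exists_ne_zero.mp h3
  exact ⟨x.1, by simpa [Submodule.coe_eq_zero] using hx, x.2.1, x.2.2⟩

lemma dot_normalize (Y : Matrix (Fin n) (Fin n) ℂ) (c : ℝ) (x : Fin n → ℂ) :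
    (star (((c : ℂ)) • x) ⬝ᵥ (Y *ᵥ ((c : ℂ) • x))).re = c ^ 2 * (star x ⬝ᵥ (Y *ᵥ x)).re := by
  rw [mulVec_smul, star_smul, smul_dotProduct, dotProduct_smul]
  rw [show star ((c : ℂ)) = (c : ℂ) by simp]
  rw [smul_eq_mul, smul_eq_mul, ← mul_assoc]
  rw [show ((c:ℂ) * (c:ℂ)) = ((c^2 : ℝ) : ℂ) by push_cast; ring]
  rw [Complex.re_ofReal_mul]

lemma dot_normalize' (c : ℝ) (x : Fin n → ℂ) :
    (star (((c : ℂ)) • x) ⬝ᵥ ((c : ℂ) • x)).re = c ^ 2 * (star x ⬝ᵥ x).re := by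
  rw [star_smul, smul_dotProduct, dotProduct_smul]
  rw [show star ((c : ℂ)) = (c : ℂ) by simp]
  rw [smul_eq_mul, smul_eq_mul, ← mul_assoc]
  rw [show ((c:ℂ) * (c:ℂ)) = ((c^2 : ℝ) : ℂ) by push_cast; ring]
  rw [Complex.re_ofReal_mul]

end helpers

section CF
open Finset

/-- The span of the eigenvectors of `hX` indexed by `σ '' T` where `σ = Tuple.sort`. -/
noncomputable def eigSpan {X : Matrix (Fin n) (Fin n) ℂ} (hX : X.IsHermitian)
    (T : Finset (Fin n)) : Submodule ℂ (Fin n → ℂ) :=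
  Submodule.span ℂ (Set.range fun i : {i // i ∈ T} =>
    (hX.eigenvectorBasis (Tuple.sort hX.eigenvalues i.1) : Fin n → ℂ))

lemma eigSpan_dot {X : Matrix (Fin n) (Fin n) ℂ} (hX : X.IsHermitian) (T : Finset (Fin n)) :
    ∀ i j : {i // i ∈ T},
      star ((hX.eigenvectorBasis (Tuple.sort hX.eigenvalues i.1) : Fin n → ℂ)) ⬝ᵥ
        (hX.eigenvectorBasis (Tuple.sort hX.eigenvalues j.1) : Fin n → ℂ)
      = if i = j then 1 else 0 := by
  intro i j
  rw [bdot hX]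
  by_cases h : i = j
  · subst h; simp
  · rw [if_neg h, if_neg]
    intro h'; exact h (Subtype.ext ((Tuple.sort hX.eigenvalues).injective h'))

lemma eigSpan_finrank {X : Matrix (Fin n) (Fin n) ℂ} (hX : X.IsHermitian) (T : Finset (Fin n)) :
    Module.finrank ℂ (eigSpan hX T) = T.card := by
  rw [eigSpan, finrank_span_eq_card (lin_indep_of_dot _ (eigSpan_dot hX T))]
  exact Fintype.card_coe T

lemma CF_lower {X : Matrix (Fin n) (Fin n) ℂ} (hX : X.IsHermitian) (k : Fin n) (μ : ℝ)
    (M : Submodule ℂ (Fin n → ℂ)) (hdim : (k : ℕ) + 1 ≤ Module.finrank ℂ M)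
    (hq : ∀ x ∈ M, (star x ⬝ᵥ x).re = 1 → μ ≤ (star x ⬝ᵥ (X *ᵥ x)).re) :
    μ ≤ eigDesc hX k := by
  classical
  set σ := Tuple.sort hX.eigenvalues with hσ
  set N := eigSpan hX (Finset.Iic k.rev) with hN
  have hNrank : Module.finrank ℂ N = n - (k : ℕ) := by
    rw [hN, eigSpan_finrank, Fin.card_Iic]
    simp [Fin.rev]
    omega
  obtain ⟨x, hx0, hxM, hxN⟩ := exists_ne_zero_mem_inf M N (by
    have : Module.finrank ℂ M + Module.finrank ℂ N = Module.finrank ℂ M + (n - (k:ℕ)) := by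
      rw [hNrank]
    omega)
  obtain ⟨c, hc⟩ := (Submodule.mem_span_range_iff_exists_fun ℂ).mp hxN
  obtain ⟨w, hw0, hwsum, hwq⟩ := exists_weights _ (eigSpan_dot hX (Finset.Iic k.rev)) c
  rw [hc] at hwsum hwq
  have hq1 := hwq X (fun i => hX.eigenvalues (σ i.1)) (fun i => hX.mulVec_eigenvectorBasis _)
  -- bound: each eigenvalue ≤ eigDesc hX k
  have hbound : ∀ i : {i // i ∈ Finset.Iic k.rev}, hX.eigenvalues (σ i.1) ≤ eigDesc hX k := by
    intro i
    have := Tuple.monotone_sort hX.eigenvalues (Finset.mem_Iic.mp i.2)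
    exact this
  have hqle : (star x ⬝ᵥ (X *ᵥ x)).re ≤ eigDesc hX k * (star x ⬝ᵥ x).re := by
    rw [hq1, hwsum, Finset.mul_sum]
    refine Finset.sum_le_sum fun i _ => ?_
    rw [mul_comm (eigDesc hX k)]
    exact mul_le_mul_of_nonneg_left (hbound i) (hw0 i)
  -- normalize
  set s := (star x ⬝ᵥ x).re with hs
  have hspos : 0 < s := nsq_pos hx0
  set t : ℝ := (Real.sqrt s)⁻¹ with ht
  have htpos : 0 < t := by positivity
  have ht2 : t ^ 2 * s = 1 := by
    rw [ht, ← Real.sqrt_inv]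
    rw [Real.sq_sqrt (by positivity)]
    field_simp
  have hx'M : ((t : ℂ)) • x ∈ M := M.smul_mem _ hxM
  have hx'1 : (star (((t:ℂ)) • x) ⬝ᵥ (((t:ℂ)) • x)).re = 1 := by
    rw [dot_normalize']
    exact ht2
  have := hq _ hx'M hx'1
  rw [dot_normalize] at this
  -- conclude
  have h2 : t ^ 2 * (star x ⬝ᵥ (X *ᵥ x)).re ≤ t ^ 2 * (eigDesc hX k * s) :=
    mul_le_mul_of_nonneg_left hqle (by positivity)
  have h3 : t ^ 2 * (eigDesc hX k * s) = eigDesc hX k := by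
    rw [show t^2 * (eigDesc hX k * s) = eigDesc hX k * (t^2 * s) by ring, ht2, mul_one]
  linarith

lemma CF_upper {X : Matrix (Fin n) (Fin n) ℂ} (hX : X.IsHermitian) (k : Fin n) (μ : ℝ)
    (M : Submodule ℂ (Fin n → ℂ)) (hdim : n - (k : ℕ) ≤ Module.finrank ℂ M)
    (hq : ∀ x ∈ M, (star x ⬝ᵥ x).re = 1 → (star x ⬝ᵥ (X *ᵥ x)).re ≤ μ) :
    eigDesc hX k ≤ μ := by
  classical
  set σ := Tuple.sort hX.eigenvalues with hσ
  set N := eigSpan hX (Finset.Ici k.rev) with hN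
  have hNrank : Module.finrank ℂ N = (k : ℕ) + 1 := by
    rw [hN, eigSpan_finrank, Fin.card_Ici]
    simp [Fin.rev]
    omega
  obtain ⟨x, hx0, hxM, hxN⟩ := exists_ne_zero_mem_inf M N (by omega)
  obtain ⟨c, hc⟩ := (Submodule.mem_span_range_iff_exists_fun ℂ).mp hxN
  obtain ⟨w, hw0, hwsum, hwq⟩ := exists_weights _ (eigSpan_dot hX (Finset.Ici k.rev)) c
  rw [hc] at hwsum hwq
  have hq1 := hwq X (fun i => hX.eigenvalues (σ i.1)) (fun i => hX.mulVec_eigenvectorBasis _)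
  have hbound : ∀ i : {i // i ∈ Finset.Ici k.rev}, eigDesc hX k ≤ hX.eigenvalues (σ i.1) := by
    intro i
    exact Tuple.monotone_sort hX.eigenvalues (Finset.mem_Ici.mp i.2)
  have hqge : eigDesc hX k * (star x ⬝ᵥ x).re ≤ (star x ⬝ᵥ (X *ᵥ x)).re := by
    rw [hq1, hwsum, Finset.mul_sum]
    refine Finset.sum_le_sum fun i _ => ?_
    rw [mul_comm (eigDesc hX k)]
    exact mul_le_mul_of_nonneg_left (hbound i) (hw0 i)
  set s := (star x ⬝ᵥ x).re with hs
  have hspos : 0 < s := nsq_pos hx0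
  set t : ℝ := (Real.sqrt s)⁻¹ with ht
  have htpos : 0 < t := by positivity
  have ht2 : t ^ 2 * s = 1 := by
    rw [ht, ← Real.sqrt_inv]
    rw [Real.sq_sqrt (by positivity)]
    field_simp
  have hx'M : ((t : ℂ)) • x ∈ M := M.smul_mem _ hxM
  have hx'1 : (star (((t:ℂ)) • x) ⬝ᵥ (((t:ℂ)) • x)).re = 1 := by
    rw [dot_normalize']
    exact ht2
  have := hq _ hx'M hx'1
  rw [dot_normalize] at this
  have h2 : t ^ 2 * (eigDesc hX k * s) ≤ t ^ 2 * (star x ⬝ᵥ (X *ᵥ x)).re :=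
    mul_le_mul_of_nonneg_left hqge (by positivity)
  have h3 : t ^ 2 * (eigDesc hX k * s) = eigDesc hX k := by
    rw [show t^2 * (eigDesc hX k * s) = eigDesc hX k * (t^2 * s) by ring, ht2, mul_one]
  linarith

end CF

section span2
/-- Span of eigenvectors indexed by an arbitrary finset. -/
noncomputable def basisSpan {X : Matrix (Fin n) (Fin n) ℂ} (hX : X.IsHermitian)
    (S : Finset (Fin n)) : Submodule ℂ (Fin n → ℂ) :=
  Submodule.span ℂ (Set.range fun i : {i // i ∈ S} => (hX.eigenvectorBasis i.1 : Fin n → ℂ))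

lemma basisSpan_dot {X : Matrix (Fin n) (Fin n) ℂ} (hX : X.IsHermitian) (S : Finset (Fin n)) :
    ∀ i j : {i // i ∈ S},
      star ((hX.eigenvectorBasis i.1 : Fin n → ℂ)) ⬝ᵥ (hX.eigenvectorBasis j.1 : Fin n → ℂ)
      = if i = j then 1 else 0 := by
  intro i j
  rw [bdot hX]
  by_cases h : i = j
  · subst h; simp
  · rw [if_neg h, if_neg]
    intro h'; exact h (Subtype.ext h')

lemma basisSpan_finrank {X : Matrix (Fin n) (Fin n) ℂ} (hX : X.IsHermitian)
    (S : Finset (Fin n)) : Module.finrank ℂ (basisSpan hX S) = S.card := by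
  rw [basisSpan, finrank_span_eq_card (lin_indep_of_dot _ (basisSpan_dot hX S))]
  exact Fintype.card_coe S
end span2

section jensen

lemma cfc_mulVec {A : Matrix (Fin n) (Fin n) ℂ} (hA : A.IsHermitian) (f : ℝ → ℝ) (i : Fin n) :
    (hA.cfc f) *ᵥ (hA.eigenvectorBasis i : Fin n → ℂ)
      = ((f (hA.eigenvalues i) : ℝ) : ℂ) • (hA.eigenvectorBasis i : Fin n → ℂ) := by
  have h1 : star (hA.eigenvectorUnitary : Matrix (Fin n) (Fin n) ℂ)
      *ᵥ (hA.eigenvectorBasis i : Fin n → ℂ) = Pi.single i 1 :=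
    hA.star_eigenvectorUnitary_mulVec i
  have h2 : (hA.eigenvectorUnitary : Matrix (Fin n) (Fin n) ℂ) *ᵥ Pi.single i 1
      = (hA.eigenvectorBasis i : Fin n → ℂ) :=
    hA.eigenvectorUnitary_mulVec i
  rw [Matrix.IsHermitian.cfc, Unitary.conjStarAlgAut_apply, ← mulVec_mulVec, ← mulVec_mulVec, h1,
    Matrix.diagonal_mulVec_single]
  have : Pi.single (M := fun _ : Fin n => ℂ) i ((RCLike.ofReal ∘ f ∘ hA.eigenvalues) i * 1)
      = ((f (hA.eigenvalues i) : ℝ) : ℂ) • Pi.single (M := fun _ : Fin n => ℂ) i (1 : ℂ) := by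
    funext k
    by_cases hk : k = i
    · subst hk
      simp
    · simp [Pi.single_eq_of_ne hk]
  rw [this, mulVec_smul, h2]


lemma jensen_sub_one {ι : Type*} [Fintype ι] {f : ℝ → ℝ} (hf : ConvexOn ℝ Set.univ f)
    (hf0 : f 0 ≤ 0) (w d : ι → ℝ) (hw : ∀ i, 0 ≤ w i) (hw1 : ∑ i, w i ≤ 1) :
    f (∑ i, w i * d i) ≤ ∑ i, w i * f (d i) := by
  classical
  set w' : Option ι → ℝ := fun o => o.elim (1 - ∑ i, w i) w with hw'
  set d' : Option ι → ℝ := fun o => o.elim 0 d with hd'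
  have h0 : ∀ o ∈ Finset.univ, 0 ≤ w' o := by
    rintro (_ | i) _
    · simpa [w'] using by linarith
    · exact hw i
  have h1 : ∑ o, w' o = 1 := by
    rw [Fintype.sum_option]; simp [w']
  have hmem : ∀ o ∈ Finset.univ, d' o ∈ Set.univ := fun _ _ => trivial
  have := hf.map_sum_le h0 h1 hmem
  rw [Fintype.sum_option, Fintype.sum_option] at this
  simp only [w', d', Option.elim] at this
  have h2 : ∑ i, w i • d i = ∑ i, w i * d i := by simp [smul_eq_mul]
  calc f (∑ i, w i * d i) = f ((1 - ∑ i, w i) • (0:ℝ) + ∑ i, w i • d i) := by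
        rw [h2, smul_zero, zero_add]
    _ ≤ (1 - ∑ i, w i) • f 0 + ∑ i, w i • f (d i) := this
    _ ≤ ∑ i, w i * f (d i) := by
        simp only [smul_eq_mul]
        nlinarith

lemma convex_dichotomy {f : ℝ → ℝ} (hf : ConvexOn ℝ Set.univ f) (x : ℝ) :
    MonotoneOn f (Set.Ici x) ∨ AntitoneOn f (Set.Iic x) := by
  by_cases h : MonotoneOn f (Set.Ici x)
  · exact Or.inl h
  · right
    simp only [MonotoneOn] at h
    push_neg at h
    obtain ⟨s, hs, t, ht, hst, hfst⟩ := h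
    intro u hu v hv huv
    rcases eq_or_lt_of_le huv with rfl | huv
    · exact le_refl _
    have hst' : s < t := lt_of_le_of_ne hst (by rintro rfl; exact lt_irrefl _ hfst)
    have hvs : v ≤ s := le_trans hv hs
    have hvt : v < t := lt_of_le_of_lt hvs hst'
    have h1 : (f u - f v) / (u - v) ≤ (f t - f v) / (t - v) :=
      hf.secant_mono trivial trivial trivial (ne_of_lt huv) (ne_of_gt hvt)
        (le_of_lt (lt_of_lt_of_le huv (le_trans hvt.le (le_refl t))))
    have h2 : (f v - f t) / (v - t) ≤ (f s - f t) / (s - t) :=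
      hf.secant_mono trivial trivial trivial (ne_of_lt hvt) (ne_of_lt hst') hvs
    have e1 : (f t - f v) / (t - v) = (f v - f t) / (v - t) := by
      rw [← neg_div_neg_eq]; ring_nf
    have e2 : (f s - f t) / (s - t) = (f t - f s) / (t - s) := by
      rw [← neg_div_neg_eq]; ring_nf
    have h3 : (f t - f s) / (t - s) < 0 :=
      div_neg_of_neg_of_pos (by linarith) (by linarith)
    have h4 : (f u - f v) / (u - v) < 0 := by
      rw [e1] at h1; rw [e2] at h2; linarith
    have h5 : u - v < 0 := by linarith
    rcases div_neg_iff.mp h4 with ⟨h6, h7⟩ | ⟨h6, h7⟩ <;> linarith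

lemma quad_jensen {A : Matrix (Fin n) (Fin n) ℂ} (hA : A.IsHermitian) {f : ℝ → ℝ}
    (hf : ConvexOn ℝ Set.univ f) (hf0 : f 0 ≤ 0) (u : Fin n → ℂ)
    (hu : (star u ⬝ᵥ u).re ≤ 1) :
    f ((star u ⬝ᵥ (A *ᵥ u)).re) ≤ (star u ⬝ᵥ ((hA.cfc f) *ᵥ u)).re := by
  classical
  have hspan : u ∈ Submodule.span ℂ
      (Set.range fun i : Fin n => (hA.eigenvectorBasis i : Fin n → ℂ)) := by
    rw [Submodule.mem_span_range_iff_exists_fun]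
    refine ⟨fun i => hA.eigenvectorBasis.repr (WithLp.toLp 2 u) i, ?_⟩
    have := congrArg WithLp.ofLp (hA.eigenvectorBasis.sum_repr (WithLp.toLp 2 u))
    simpa using this
  obtain ⟨c, hc⟩ := (Submodule.mem_span_range_iff_exists_fun ℂ).mp hspan
  obtain ⟨w, hw0, hwsum, hwq⟩ := exists_weights _ (fun i j => bdot hA i j) c
  rw [hc] at hwsum hwq
  have hqA := hwq A hA.eigenvalues (fun i => hA.mulVec_eigenvectorBasis i)
  have hqf := hwq (hA.cfc f) (fun i => f (hA.eigenvalues i)) (fun i => cfc_mulVec hA f i)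
  rw [hqA, hqf]
  exact jensen_sub_one hf hf0 w hA.eigenvalues hw0 (by rw [← hwsum]; exact hu)

end jensen

section contraction

lemma dot_conj_transform (F Z : Matrix (Fin n) (Fin n) ℂ) (h : Fin n → ℂ) :
    star h ⬝ᵥ ((Zᴴ * F * Z) *ᵥ h) = star (Z *ᵥ h) ⬝ᵥ (F *ᵥ (Z *ᵥ h)) := by
  rw [← mulVec_mulVec, ← mulVec_mulVec]
  rw [star_mulVec, ← dotProduct_mulVec]

lemma contraction_nsq {Z : Matrix (Fin n) (Fin n) ℂ} (hZ : (1 - Zᴴ * Z).PosSemidef)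
    (h : Fin n → ℂ) : (star (Z *ᵥ h) ⬝ᵥ (Z *ᵥ h)).re ≤ (star h ⬝ᵥ h).re := by
  have h1 := hZ.dotProduct_mulVec_nonneg h
  rw [sub_mulVec, one_mulVec, dotProduct_sub] at h1
  have h2 : star h ⬝ᵥ ((Zᴴ * Z) *ᵥ h) = star (Z *ᵥ h) ⬝ᵥ (Z *ᵥ h) := by
    rw [← mulVec_mulVec, star_mulVec, ← dotProduct_mulVec]
  rw [h2] at h1
  have h3 := Complex.le_def.mp h1
  simp only [Complex.zero_re, Complex.sub_re] at h3
  linarith [h3.1]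

end contraction

lemma mem_basisSpan_iff {X : Matrix (Fin n) (Fin n) ℂ} (hX : X.IsHermitian)
    (S : Finset (Fin n)) (x : Fin n → ℂ) :
    x ∈ basisSpan hX S ↔
      ∃ c : {i // i ∈ S} → ℂ, ∑ i, c i • (hX.eigenvectorBasis i.1 : Fin n → ℂ) = x :=
  Submodule.mem_span_range_iff_exists_fun ℂ


end EigProofHelpers

set_option maxHeartbeats 2000000 in
/-- **Theorem 2.1, eigenvalue form.** If `f` is convex with `f 0 ≤ 0`, `A` is Hermitian
and `Z` is a contraction (`Zᴴ Z ≤ I`), then `λ_{2j-1}(f(Zᴴ A Z)) ≤ λ_j(Zᴴ f(A) Z)`. -/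
theorem eig_cfc_contraction_le
    {n : ℕ} (f : ℝ → ℝ) (hf : ConvexOn ℝ Set.univ f) (hf0 : f 0 ≤ 0)
    (A : Matrix (Fin n) (Fin n) ℂ) (hA : A.IsHermitian)
    (Z : Matrix (Fin n) (Fin n) ℂ) (hZ : (1 - Zᴴ * Z).PosSemidef)
    (j : ℕ) (hj : 1 ≤ j) (hjn : 2 * j - 1 ≤ n) :
    eigDesc (isHermitian_cfc (isHermitian_conjTranspose_mul_mul Z hA) f)
        ⟨2 * j - 1 - 1, by omega⟩ ≤
      eigDesc (isHermitian_conjTranspose_mul_mul Z (isHermitian_cfc hA f))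
        ⟨j - 1, by omega⟩ := by
  classical
  have hn : 0 < n := by omega
  set hB : (Zᴴ * A * Z).IsHermitian := isHermitian_conjTranspose_mul_mul Z hA with hBdef
  set d : Fin n → ℝ := hB.eigenvalues with hd
  set τ : Equiv.Perm (Fin n) := Tuple.sort (f ∘ d) with hτ
  have hmono : Monotone ((f ∘ d) ∘ τ) := Tuple.monotone_sort (f ∘ d)
  set kk : Fin n := ⟨2 * j - 1 - 1, by omega⟩ with hkk
  set k2 : Fin n := ⟨j - 1, by omega⟩ with hk2
  set ν : ℝ := f (d (τ kk.rev)) with hν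
  have hkkrev : (kk.rev : ℕ) = n - (2 * j - 1) := by
    simp [Fin.val_rev, hkk]
    omega
  -- Step A : LHS ≤ ν
  have stepA : eigDesc (isHermitian_cfc hB f) kk ≤ ν := by
    set S₁ : Finset (Fin n) := Finset.image τ (Finset.Iic kk.rev) with hS₁
    refine CF_upper _ kk ν (basisSpan hB S₁) ?_ ?_
    · rw [basisSpan_finrank, hS₁, Finset.card_image_of_injective _ τ.injective, Fin.card_Iic,
        hkkrev]
      have : (kk : ℕ) = 2 * j - 1 - 1 := rfl
      omega
    · intro x hx hx1
      obtain ⟨c, hc⟩ := (mem_basisSpan_iff hB S₁ x).mp hx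
      obtain ⟨w, hw0, hwsum, hwq⟩ := exists_weights _ (basisSpan_dot hB S₁) c
      rw [hc] at hwsum hwq
      have hq1 := hwq (hB.cfc f) (fun i => f (d i.1)) (fun i => cfc_mulVec hB f i.1)
      rw [hq1]
      have hb : ∀ i : {i // i ∈ S₁}, f (d i.1) ≤ ν := by
        rintro ⟨p, hp⟩
        obtain ⟨i', hi', rfl⟩ := Finset.mem_image.mp hp
        exact hmono (Finset.mem_Iic.mp hi')
      calc ∑ i, w i * f (d i.1) ≤ ∑ i : {i // i ∈ S₁}, w i * ν :=
            Finset.sum_le_sum fun i _ => mul_le_mul_of_nonneg_left (hb i) (hw0 i)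
        _ = (∑ i : {i // i ∈ S₁}, w i) * ν := by rw [Finset.sum_mul]
        _ = ν := by rw [← hwsum, hx1, one_mul]
  -- Step B : ν ≤ RHS
  have stepB : ν ≤ eigDesc (isHermitian_conjTranspose_mul_mul Z (isHermitian_cfc hA f)) k2 := by
    set G : Finset (Fin n) := Finset.image τ (Finset.Ici kk.rev) with hG
    have hGcard : G.card = 2 * j - 1 := by
      rw [hG, Finset.card_image_of_injective _ τ.injective, Fin.card_Ici, hkkrev]
      omega
    have hGν : ∀ p ∈ G, ν ≤ f (d p) := by
      intro p hp
      obtain ⟨i', hi', rfl⟩ := Finset.mem_image.mp hp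
      exact hmono (Finset.mem_Ici.mp hi')
    set P : Finset (Fin n) := G.filter (fun p => MonotoneOn f (Set.Ici (d p))) with hP
    have hPG : P ⊆ G := Finset.filter_subset _ _
    have hanti : ∀ p ∈ G \ P, AntitoneOn f (Set.Iic (d p)) := by
      intro p hp
      obtain ⟨hpG, hpP⟩ := Finset.mem_sdiff.mp hp
      rcases convex_dichotomy hf (d p) with h | h
      · exact absurd (Finset.mem_filter.mpr ⟨hpG, h⟩) hpP
      · exact h
    -- the common core, given a good subset G'
    have core : ∀ G' : Finset (Fin n), G' ⊆ G → G'.card = j →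
        ∀ m : ℝ, (∃ g₀ ∈ G', d g₀ = m) → (ν ≤ f m) →
        (∀ x : Fin n → ℂ, x ∈ basisSpan hB G' → (star x ⬝ᵥ x).re = 1 →
          f ((star x ⬝ᵥ ((Zᴴ * A * Z) *ᵥ x)).re) ≤
            (star x ⬝ᵥ ((Zᴴ * (hA.cfc f) * Z) *ᵥ x)).re) →
        (∀ x : Fin n → ℂ, x ∈ basisSpan hB G' → (star x ⬝ᵥ x).re = 1 →
          ν ≤ f ((star x ⬝ᵥ ((Zᴴ * A * Z) *ᵥ x)).re)) →
        ν ≤ eigDesc (isHermitian_conjTranspose_mul_mul Z (isHermitian_cfc hA f)) k2 := by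
      intro G' hsub hcard m hm hνm hjen hcmp
      refine CF_lower _ k2 ν (basisSpan hB G') ?_ ?_
      · rw [basisSpan_finrank, hcard]
        have : (k2 : ℕ) = j - 1 := rfl
        omega
      · intro x hx hx1
        exact le_trans (hcmp x hx hx1) (hjen x hx hx1)
    -- jensen part, valid for any G' ⊆ G
    have hjen : ∀ x : Fin n → ℂ, (star x ⬝ᵥ x).re = 1 →
        f ((star x ⬝ᵥ ((Zᴴ * A * Z) *ᵥ x)).re) ≤
          (star x ⬝ᵥ ((Zᴴ * (hA.cfc f) * Z) *ᵥ x)).re := by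
      intro x hx1
      have hu1 : (star (Z *ᵥ x) ⬝ᵥ (Z *ᵥ x)).re ≤ 1 := by
        rw [← hx1]
        exact contraction_nsq hZ x
      have h1 := quad_jensen hA hf hf0 (Z *ᵥ x) hu1
      rw [dot_conj_transform A Z x, dot_conj_transform (hA.cfc f) Z x]
      exact h1
    -- quadratic form of B on the span of G', with weights
    have hBform : ∀ G' : Finset (Fin n), ∀ x : Fin n → ℂ, x ∈ basisSpan hB G' →
        ∃ w : {i // i ∈ G'} → ℝ, (∀ i, 0 ≤ w i) ∧ ((star x ⬝ᵥ x).re = ∑ i, w i) ∧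
          (star x ⬝ᵥ ((Zᴴ * A * Z) *ᵥ x)).re = ∑ i, w i * d i.1 := by
      intro G' x hx
      obtain ⟨c, hc⟩ := (mem_basisSpan_iff hB G' x).mp hx
      obtain ⟨w, hw0, hwsum, hwq⟩ := exists_weights _ (basisSpan_dot hB G') c
      rw [hc] at hwsum hwq
      exact ⟨w, hw0, hwsum, hwq (Zᴴ * A * Z) (fun i => d i.1)
        (fun i => hB.mulVec_eigenvectorBasis i.1)⟩
    by_cases hcase : j ≤ P.card
    · obtain ⟨G', hsub, hcard⟩ := Finset.exists_subset_card_eq hcase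
      have hG'G : G' ⊆ G := hsub.trans hPG
      obtain ⟨g₀, hg₀, hmin⟩ := Finset.exists_min_image G' d
        (Finset.card_pos.mp (by omega))
      have hmonoI : MonotoneOn f (Set.Ici (d g₀)) :=
        (Finset.mem_filter.mp (hsub hg₀)).2
      refine core G' hG'G hcard (d g₀) ⟨g₀, hg₀, rfl⟩ (hGν _ (hG'G hg₀)) (fun x _ => hjen x) ?_
      intro x hx hx1
      obtain ⟨w, hw0, hwsum, hwB⟩ := hBform G' x hx
      have hwsum1 : ∑ i, w i = 1 := by rw [← hwsum, hx1]
      have ht : d g₀ ≤ (star x ⬝ᵥ ((Zᴴ * A * Z) *ᵥ x)).re := by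
        rw [hwB]
        calc d g₀ = (∑ i : {i // i ∈ G'}, w i) * d g₀ := by rw [hwsum1, one_mul]
          _ = ∑ i : {i // i ∈ G'}, w i * d g₀ := by rw [Finset.sum_mul]
          _ ≤ ∑ i : {i // i ∈ G'}, w i * d i.1 :=
              Finset.sum_le_sum fun i _ =>
                mul_le_mul_of_nonneg_left (hmin i.1 i.2) (hw0 i)
      calc ν ≤ f (d g₀) := hGν _ (hG'G hg₀)
        _ ≤ f ((star x ⬝ᵥ ((Zᴴ * A * Z) *ᵥ x)).re) :=
            hmonoI Set.self_mem_Ici ht ht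
    · have hcase2 : j ≤ (G \ P).card := by
        have := Finset.card_sdiff_of_subset hPG
        omega
      obtain ⟨G', hsub, hcard⟩ := Finset.exists_subset_card_eq hcase2
      have hG'G : G' ⊆ G := hsub.trans (Finset.sdiff_subset)
      obtain ⟨g₀, hg₀, hmax⟩ := Finset.exists_max_image G' d
        (Finset.card_pos.mp (by omega))
      have hantiI : AntitoneOn f (Set.Iic (d g₀)) := hanti _ (hsub hg₀)
      refine core G' hG'G hcard (d g₀) ⟨g₀, hg₀, rfl⟩ (hGν _ (hG'G hg₀)) (fun x _ => hjen x) ?_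
      intro x hx hx1
      obtain ⟨w, hw0, hwsum, hwB⟩ := hBform G' x hx
      have hwsum1 : ∑ i, w i = 1 := by rw [← hwsum, hx1]
      have ht : (star x ⬝ᵥ ((Zᴴ * A * Z) *ᵥ x)).re ≤ d g₀ := by
        rw [hwB]
        calc ∑ i : {i // i ∈ G'}, w i * d i.1 ≤ ∑ i : {i // i ∈ G'}, w i * d g₀ :=
              Finset.sum_le_sum fun i _ =>
                mul_le_mul_of_nonneg_left (hmax i.1 i.2) (hw0 i)
          _ = (∑ i : {i // i ∈ G'}, w i) * d g₀ := by rw [Finset.sum_mul]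
          _ = d g₀ := by rw [hwsum1, one_mul]
      calc ν ≤ f (d g₀) := hGν _ (hG'G hg₀)
        _ ≤ f ((star x ⬝ᵥ ((Zᴴ * A * Z) *ᵥ x)).re) :=
            hantiI ht Set.self_mem_Iic ht
  exact le_trans stepA stepB
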